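/- Let T be a nonnegative random variable and N ≥ 3, n ≥ 1 with log N ≤ n. Suppose P(T ≥ √u) ≤ min(1, 2N exp(−3√u·√(log N)/(16√n))) for all u ≥ 36 n log N. Then E[T²] ≤ 36 n log N + 2⁸ n. -/

import Mathlib

open MeasureTheory Set Filter Topology

lemma aux_sqrt_atTop : Tendsto Real.sqrt atTop atTop := by
  apply Filter.tendsto_atTop_atTop.2
  intro b
  refine ⟨(max b 0) ^ 2, fun x hx => ?_⟩
  calc b ≤ max b 0 := le_max_left _ _
    _ = Real.sqrt ((max b 0) ^ 2) := (Real.sqrt_sq (le_max_right _ _)).symm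
    _ ≤ Real.sqrt x := Real.sqrt_le_sqrt hx

lemma aux_tail {a B : ℝ} (ha : 0 < a) (hB : 0 < B) :
    IntegrableOn (fun u => Real.exp (-(a * Real.sqrt u))) (Set.Ioi B) ∧
    ∫ u in Set.Ioi B, Real.exp (-(a * Real.sqrt u)) =
      (2 * Real.sqrt B / a + 2 / a ^ 2) * Real.exp (-(a * Real.sqrt B)) := by
  set G : ℝ → ℝ := fun u =>
    -((2 * Real.sqrt u / a + 2 / a ^ 2) * Real.exp (-(a * Real.sqrt u))) with hG
  have hderiv : ∀ u ∈ Set.Ici B, HasDerivAt G (Real.exp (-(a * Real.sqrt u))) u := by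
    intro u hu
    have hu0 : 0 < u := lt_of_lt_of_le hB hu
    have hs0 : 0 < Real.sqrt u := Real.sqrt_pos.2 hu0
    have hs : HasDerivAt Real.sqrt (1 / (2 * Real.sqrt u)) u :=
      Real.hasDerivAt_sqrt (ne_of_gt hu0)
    have he : HasDerivAt (fun u => Real.exp (-(a * Real.sqrt u)))
        (Real.exp (-(a * Real.sqrt u)) * (-(a * (1 / (2 * Real.sqrt u))))) u :=
      ((hs.const_mul a).neg).exp
    have hpoly : HasDerivAt (fun u => 2 * Real.sqrt u / a + 2 / a ^ 2)
        (2 * (1 / (2 * Real.sqrt u)) / a) u :=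
      ((hs.const_mul 2).div_const a).add_const _
    have h := (hpoly.mul he).neg
    refine h.congr_deriv ?_
    field_simp
    ring
  have h0 : Tendsto (fun t : ℝ => -((2 * t / a + 2 / a ^ 2) * Real.exp (-(a * t))))
      atTop (𝓝 0) := by
    have h1 : Tendsto (fun t : ℝ => t ^ (1 : ℝ) * Real.exp (-a * t)) atTop (𝓝 0) :=
      tendsto_rpow_mul_exp_neg_mul_atTop_nhds_zero 1 a ha
    have h2 : Tendsto (fun t : ℝ => Real.exp (-a * t)) atTop (𝓝 0) := by
      have h := Real.tendsto_exp_neg_atTop_nhds_zero.comp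
        (Filter.Tendsto.const_mul_atTop ha (tendsto_id (α := ℝ)))
      exact h.congr fun t => by simp [Function.comp, neg_mul]
    have key : Tendsto (fun t : ℝ => -((2 / a) * (t ^ (1:ℝ) * Real.exp (-a * t))
        + (2 / a ^ 2) * Real.exp (-a * t))) atTop (𝓝 (-(2 / a * 0 + 2 / a ^ 2 * 0))) :=
      (((h1.const_mul _).add (h2.const_mul _))).neg
    rw [mul_zero, mul_zero, add_zero, neg_zero] at key
    apply key.congr'
    filter_upwards [eventually_gt_atTop 0] with t ht
    rw [Real.rpow_one]
    ring_nf
  have htend : Tendsto G atTop (𝓝 0) := by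
    exact h0.comp aux_sqrt_atTop
  have hpos : ∀ x ∈ Set.Ioi B, 0 ≤ Real.exp (-(a * Real.sqrt x)) := fun x _ => (Real.exp_pos _).le
  refine ⟨integrableOn_Ioi_deriv_of_nonneg' hderiv hpos htend, ?_⟩
  rw [integral_Ioi_of_hasDerivAt_of_nonneg' hderiv hpos htend]
  simp only [hG, zero_sub, neg_neg]

theorem stmt_6 {Ω : Type*} [MeasurableSpace Ω] (μ : Measure Ω) [IsProbabilityMeasure μ]
    (T : Ω → ℝ) (hT : ∀ ω, 0 ≤ T ω) (hTmeas : Measurable T)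
    (N n : ℝ) (hN : 3 ≤ N) (hn : 1 ≤ n) (hlog : Real.log N ≤ n)
    (htail : ∀ u : ℝ, 36 * n * Real.log N ≤ u →
      μ {ω | Real.sqrt u ≤ T ω} ≤ ENNReal.ofReal
        (min 1 (2 * N * Real.exp (-3 * Real.sqrt u * Real.sqrt (Real.log N) / (16 * Real.sqrt n))))) :
    ∫⁻ ω, ENNReal.ofReal ((T ω) ^ 2) ∂μ ≤
      ENNReal.ofReal (36 * n * Real.log N + 2 ^ 8 * n) := by
  set L := Real.log N with hLdef
  have hN0 : (0:ℝ) < N := by linarith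
  have hL1 : 1 ≤ L := by
    rw [hLdef, Real.le_log_iff_exp_le hN0]
    calc Real.exp 1 ≤ 2.7182818286 := Real.exp_one_lt_d9.le
      _ ≤ N := by linarith
  have hL0 : (0:ℝ) < L := lt_of_lt_of_le one_pos hL1
  have hn0 : (0:ℝ) < n := lt_of_lt_of_le one_pos hn
  set B := 36 * n * L with hBdef
  have hB0 : 0 < B := by rw [hBdef]; positivity
  set a := 3 * Real.sqrt L / (16 * Real.sqrt n) with hadef
  have hsL : 0 < Real.sqrt L := Real.sqrt_pos.2 hL0
  have hsn : 0 < Real.sqrt n := Real.sqrt_pos.2 hn0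
  have ha0 : 0 < a := by rw [hadef]; positivity
  have hLL : Real.sqrt L * Real.sqrt L = L := Real.mul_self_sqrt hL0.le
  have hnn : Real.sqrt n * Real.sqrt n = n := Real.mul_self_sqrt hn0.le
  have hsB : Real.sqrt B = 6 * (Real.sqrt n * Real.sqrt L) := by
    have h6 : (6 * (Real.sqrt n * Real.sqrt L)) ^ 2 = 36 * n * L := by
      calc (6 * (Real.sqrt n * Real.sqrt L)) ^ 2
          = 36 * (Real.sqrt n * Real.sqrt n) * (Real.sqrt L * Real.sqrt L) := by ring
        _ = 36 * n * L := by rw [hLL, hnn]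
    rw [hBdef, ← h6, Real.sqrt_sq (by positivity)]
  have haB : a * Real.sqrt B = 9 / 8 * L := by
    rw [hsB, hadef]
    field_simp
    nlinarith [hLL, hnn, hsn, hsL]
  obtain ⟨hInt, hIval⟩ := aux_tail ha0 hB0
  have h1 : 2 * Real.sqrt B / a = 64 * n := by
    rw [hsB, hadef]
    field_simp
    nlinarith [hLL, hnn, hsn, hsL]
  have h2 : 2 / a ^ 2 = 512 * n / (9 * L) := by
    rw [hadef]
    field_simp
    nlinarith [hLL, hnn, hsn, hsL]
  have hNexp : N = Real.exp L := (Real.exp_log hN0).symm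
  have hval : 2 * N * ((2 * Real.sqrt B / a + 2 / a ^ 2) * Real.exp (-(a * Real.sqrt B)))
      ≤ 2 ^ 8 * n := by
    rw [h1, h2, haB]
    have hE : N * Real.exp (-(9 / 8 * L)) = Real.exp (-(L / 8)) := by
      rw [hNexp, ← Real.exp_add]; congr 1; ring
    have hE1 : Real.exp (-(L / 8)) ≤ 1 := by
      calc Real.exp (-(L / 8)) ≤ Real.exp 0 := Real.exp_le_exp.2 (by linarith)
        _ = 1 := Real.exp_zero
    have hE0 : 0 < Real.exp (-(L / 8)) := Real.exp_pos _
    have hfrac : 512 * n / (9 * L) ≤ 512 * n / 9 := by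
      apply div_le_div_of_nonneg_left (by positivity) (by norm_num) (by linarith)
    calc 2 * N * ((64 * n + 512 * n / (9 * L)) * Real.exp (-(9 / 8 * L)))
        = 2 * (64 * n + 512 * n / (9 * L)) * (N * Real.exp (-(9 / 8 * L))) := by ring
      _ = 2 * (64 * n + 512 * n / (9 * L)) * Real.exp (-(L / 8)) := by rw [hE]
      _ ≤ 2 * (64 * n + 512 * n / 9) * 1 := by
          apply mul_le_mul _ hE1 hE0.le (by positivity)
          linarith
      _ ≤ 2 ^ 8 * n := by linarith
  have key : ∀ t : ℝ, 0 ≤ t → {ω | t ≤ T ω ^ 2} = {ω | Real.sqrt t ≤ T ω} := by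
    intro t ht
    ext ω
    simp only [Set.mem_setOf_eq]
    constructor
    · intro h
      calc Real.sqrt t ≤ Real.sqrt (T ω ^ 2) := Real.sqrt_le_sqrt h
        _ = T ω := Real.sqrt_sq (hT ω)
    · intro h
      calc t = Real.sqrt t ^ 2 := (Real.sq_sqrt ht).symm
        _ ≤ T ω ^ 2 := pow_le_pow_left₀ (Real.sqrt_nonneg t) h 2
  rw [lintegral_eq_lintegral_meas_le μ (ae_of_all μ fun ω => sq_nonneg (T ω))
    ((hTmeas.pow_const 2).aemeasurable)]
  rw [← Set.Ioc_union_Ioi_eq_Ioi hB0.le,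
    lintegral_union measurableSet_Ioi Set.Ioc_disjoint_Ioi_same]
  have part1 : ∫⁻ t in Set.Ioc 0 B, μ {ω | t ≤ T ω ^ 2} ≤ ENNReal.ofReal B := by
    calc ∫⁻ t in Set.Ioc 0 B, μ {ω | t ≤ T ω ^ 2}
        ≤ ∫⁻ _ in Set.Ioc 0 B, 1 := lintegral_mono fun t => prob_le_one
      _ = ENNReal.ofReal B := by
          rw [setLIntegral_one, Real.volume_Ioc, sub_zero]
  have part2 : ∫⁻ t in Set.Ioi B, μ {ω | t ≤ T ω ^ 2} ≤ ENNReal.ofReal (2 ^ 8 * n) := by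
    calc ∫⁻ t in Set.Ioi B, μ {ω | t ≤ T ω ^ 2}
        ≤ ∫⁻ t in Set.Ioi B, ENNReal.ofReal (2 * N * Real.exp (-(a * Real.sqrt t))) := by
          apply setLIntegral_mono' measurableSet_Ioi
          intro t ht
          have htB : B ≤ t := le_of_lt ht
          have ht0 : 0 ≤ t := le_trans hB0.le htB
          rw [key t ht0]
          refine le_trans (htail t htB) ?_
          apply ENNReal.ofReal_le_ofReal
          refine le_trans (min_le_right _ _) (le_of_eq ?_)
          congr 1
          rw [hadef]
          ring
      _ = ENNReal.ofReal (∫ t in Set.Ioi B, 2 * N * Real.exp (-(a * Real.sqrt t))) := by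
          rw [← ofReal_integral_eq_lintegral_ofReal]
          · exact hInt.const_mul (2 * N)
          · exact ae_of_all _ fun t =>
              mul_nonneg (by linarith) (Real.exp_pos _).le
      _ ≤ ENNReal.ofReal (2 ^ 8 * n) := by
          apply ENNReal.ofReal_le_ofReal
          rw [integral_const_mul, hIval]
          exact hval
  calc (∫⁻ t in Set.Ioc 0 B, μ {ω | t ≤ T ω ^ 2}) + ∫⁻ t in Set.Ioi B, μ {ω | t ≤ T ω ^ 2}
      ≤ ENNReal.ofReal B + ENNReal.ofReal (2 ^ 8 * n) := add_le_add part1 part2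
    _ = ENNReal.ofReal (B + 2 ^ 8 * n) := (ENNReal.ofReal_add hB0.le (by positivity)).symm
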